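/- arXiv:1611.07202 — 4 statements merged into one kernel-verified Lean document; each statement's English description precedes it below -/
import Mathlib

section
/- First-order scaled delta expansion solution at n = 0: let S₀⁽¹⁾ = 7π²/18 − (2π²/3)·ln 2 + (π²/6)·ln(π²/6), and define for 0 < z < π the function Θ₀⁽¹⁾(z) = −4 + (4z²/π²)·(1 − ln 2) + (3 − 2π/z − z²/π²)·ln(1 − z/π) + (3 + 2π/z − z²/π²)·ln(1 + z/π). Then Θ₀⁽¹⁾ satisfies (π²/6)·(Θ₀⁽¹⁾'' + (2/z)·Θ₀⁽¹⁾') = (6/π²)·S₀⁽¹⁾ − ln(1 − z²/π²) − ln(π²/6) for all 0 < z < π, and the boundary conditions hold: Θ₀⁽¹⁾(z) → 0 and Θ₀⁽¹⁾'(z) → 0 as z → 0⁺, and Θ₀⁽¹⁾(z) → 0 as z → π⁻. -/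
open Real Filter Set Topology

noncomputable def Th (z : ℝ) : ℝ :=
  -4 + 4 * z ^ 2 / Real.pi ^ 2 * (1 - Real.log 2)
    + (3 - 2 * Real.pi / z - z ^ 2 / Real.pi ^ 2) * Real.log (1 - z / Real.pi)
    + (3 + 2 * Real.pi / z - z ^ 2 / Real.pi ^ 2) * Real.log (1 + z / Real.pi)

noncomputable def Th1 (z : ℝ) : ℝ :=
  8 * z * (1 - Real.log 2) / Real.pi ^ 2 - 2 * z / Real.pi ^ 2 + 4 / z
    + (2 * Real.pi / z ^ 2 - 2 * z / Real.pi ^ 2) * Real.log (1 - z / Real.pi)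
    - (2 * Real.pi / z ^ 2 + 2 * z / Real.pi ^ 2) * Real.log (1 + z / Real.pi)

noncomputable def Th2 (z : ℝ) : ℝ :=
  8 * (1 - Real.log 2) / Real.pi ^ 2 - 2 / Real.pi ^ 2 - 4 / z ^ 2
    + (-(4 * Real.pi / z ^ 3) - 2 / Real.pi ^ 2) * Real.log (1 - z / Real.pi)
    - (2 * Real.pi / z ^ 2 - 2 * z / Real.pi ^ 2) / (Real.pi - z)
    + (4 * Real.pi / z ^ 3 - 2 / Real.pi ^ 2) * Real.log (1 + z / Real.pi)
    - (2 * Real.pi / z ^ 2 + 2 * z / Real.pi ^ 2) / (Real.pi + z)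

lemma hasDerivAt_logm {z : ℝ} (hz : z < Real.pi) :
    HasDerivAt (fun z => Real.log (1 - z / Real.pi)) (-(1 / (Real.pi - z))) z := by
  have h1 : HasDerivAt (fun z : ℝ => 1 - z / Real.pi) (-(1 / Real.pi)) z :=
    ((hasDerivAt_id z).div_const Real.pi).const_sub 1
  have hne : 1 - z / Real.pi ≠ 0 := by
    have : 0 < 1 - z / Real.pi := by
      rw [sub_pos, div_lt_one Real.pi_pos]; exact hz
    linarith
  have := h1.log hne
  convert this using 1
  field_simp

lemma hasDerivAt_logp {z : ℝ} (hz : -Real.pi < z) :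
    HasDerivAt (fun z => Real.log (1 + z / Real.pi)) (1 / (Real.pi + z)) z := by
  have h1 : HasDerivAt (fun z : ℝ => 1 + z / Real.pi) (1 / Real.pi) z :=
    ((hasDerivAt_id z).div_const Real.pi).const_add 1
  have hne : 1 + z / Real.pi ≠ 0 := by
    have : 0 < 1 + z / Real.pi := by
      have : -1 < z / Real.pi := by
        rw [neg_lt, ← neg_div, div_lt_one Real.pi_pos]; linarith
      linarith
    linarith
  have := h1.log hne
  convert this using 1
  field_simp

lemma hasDerivAt_Th {z : ℝ} (h0 : 0 < z) (hπ : z < Real.pi) : HasDerivAt Th (Th1 z) z := by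
  have hz : z ≠ 0 := ne_of_gt h0
  have hp : Real.pi ≠ 0 := Real.pi_ne_zero
  have hmz : Real.pi - z ≠ 0 := sub_ne_zero.mpr (ne_of_gt hπ)
  have hpz : Real.pi + z ≠ 0 := by positivity
  have hA := hasDerivAt_logm hπ
  have hB := hasDerivAt_logp (z := z) (by linarith [Real.pi_pos])
  have hc1 : HasDerivAt (fun z : ℝ => 3 - 2 * Real.pi / z - z ^ 2 / Real.pi ^ 2)
      (2 * Real.pi / z ^ 2 - 2 * z / Real.pi ^ 2) z := by
    have hq : HasDerivAt (fun z : ℝ => 2 * Real.pi / z)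
        ((0 * z - 2 * Real.pi * 1) / z ^ 2) z :=
      (hasDerivAt_const z (2 * Real.pi)).div (hasDerivAt_id z) hz
    have hq2 : HasDerivAt (fun z : ℝ => z ^ 2 / Real.pi ^ 2) (2 * z / Real.pi ^ 2) z := by
      have := (hasDerivAt_pow 2 z).div_const (Real.pi ^ 2)
      simpa using this
    have := (hq.const_sub 3).sub hq2
    refine this.congr_deriv ?_
    ring
  have hc2 : HasDerivAt (fun z : ℝ => 3 + 2 * Real.pi / z - z ^ 2 / Real.pi ^ 2)
      (-(2 * Real.pi / z ^ 2) - 2 * z / Real.pi ^ 2) z := by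
    have hq : HasDerivAt (fun z : ℝ => 2 * Real.pi / z)
        ((0 * z - 2 * Real.pi * 1) / z ^ 2) z :=
      (hasDerivAt_const z (2 * Real.pi)).div (hasDerivAt_id z) hz
    have hq2 : HasDerivAt (fun z : ℝ => z ^ 2 / Real.pi ^ 2) (2 * z / Real.pi ^ 2) z := by
      have := (hasDerivAt_pow 2 z).div_const (Real.pi ^ 2)
      simpa using this
    have := (hq.const_add 3).sub hq2
    refine this.congr_deriv ?_
    ring
  have ht2 : HasDerivAt (fun z : ℝ => 4 * z ^ 2 / Real.pi ^ 2 * (1 - Real.log 2))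
      (8 * z / Real.pi ^ 2 * (1 - Real.log 2)) z := by
    have := (((hasDerivAt_pow 2 z).const_mul 4).div_const (Real.pi ^ 2)).mul_const
      (1 - Real.log 2)
    refine this.congr_deriv ?_
    push_cast
    ring
  have hbig := ((((hasDerivAt_const z (-4 : ℝ)).add ht2).add (hc1.mul hA)).add (hc2.mul hB))
  have : HasDerivAt Th
      (0 + 8 * z / Real.pi ^ 2 * (1 - Real.log 2)
        + ((2 * Real.pi / z ^ 2 - 2 * z / Real.pi ^ 2) * Real.log (1 - z / Real.pi)
          + (3 - 2 * Real.pi / z - z ^ 2 / Real.pi ^ 2) * -(1 / (Real.pi - z)))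
        + ((-(2 * Real.pi / z ^ 2) - 2 * z / Real.pi ^ 2) * Real.log (1 + z / Real.pi)
          + (3 + 2 * Real.pi / z - z ^ 2 / Real.pi ^ 2) * (1 / (Real.pi + z)))) z := hbig
  convert this using 1
  unfold Th1
  field_simp
  ring

lemma hasDerivAt_Th1 {z : ℝ} (h0 : 0 < z) (hπ : z < Real.pi) : HasDerivAt Th1 (Th2 z) z := by
  have hz : z ≠ 0 := ne_of_gt h0
  have hp : Real.pi ≠ 0 := Real.pi_ne_zero
  have hmz : Real.pi - z ≠ 0 := sub_ne_zero.mpr (ne_of_gt hπ)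
  have hpz : Real.pi + z ≠ 0 := by positivity
  have hA := hasDerivAt_logm hπ
  have hB := hasDerivAt_logp (z := z) (by linarith [Real.pi_pos])
  have hz2 : z ^ 2 ≠ 0 := pow_ne_zero _ hz
  have hd1 : HasDerivAt (fun z : ℝ => 8 * z * (1 - Real.log 2) / Real.pi ^ 2)
      (8 * (1 - Real.log 2) / Real.pi ^ 2) z := by
    have := ((((hasDerivAt_id z).const_mul 8)).mul_const (1 - Real.log 2)).div_const
      (Real.pi ^ 2)
    refine this.congr_deriv ?_
    ring
  have hd2 : HasDerivAt (fun z : ℝ => 2 * z / Real.pi ^ 2) (2 / Real.pi ^ 2) z := by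
    have := ((hasDerivAt_id z).const_mul 2).div_const (Real.pi ^ 2)
    refine this.congr_deriv ?_
    ring
  have hd3 : HasDerivAt (fun z : ℝ => 4 / z) ((0 * z - 4 * 1) / z ^ 2) z :=
    (hasDerivAt_const z (4 : ℝ)).div (hasDerivAt_id z) hz
  have hq : HasDerivAt (fun z : ℝ => 2 * Real.pi / z ^ 2)
      ((0 * z ^ 2 - 2 * Real.pi * (2 * z ^ 1)) / (z ^ 2) ^ 2) z :=
    (hasDerivAt_const z (2 * Real.pi)).div (hasDerivAt_pow 2 z) hz2
  have hc1 : HasDerivAt (fun z : ℝ => 2 * Real.pi / z ^ 2 - 2 * z / Real.pi ^ 2)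
      ((0 * z ^ 2 - 2 * Real.pi * (2 * z ^ 1)) / (z ^ 2) ^ 2 - 2 / Real.pi ^ 2) z :=
    hq.sub hd2
  have hc2 : HasDerivAt (fun z : ℝ => 2 * Real.pi / z ^ 2 + 2 * z / Real.pi ^ 2)
      ((0 * z ^ 2 - 2 * Real.pi * (2 * z ^ 1)) / (z ^ 2) ^ 2 + 2 / Real.pi ^ 2) z :=
    hq.add hd2
  have hbig := ((((hd1.sub hd2).add hd3).add (hc1.mul hA)).sub (hc2.mul hB))
  have : HasDerivAt Th1
      (8 * (1 - Real.log 2) / Real.pi ^ 2 - 2 / Real.pi ^ 2 + (0 * z - 4 * 1) / z ^ 2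
        + (((0 * z ^ 2 - 2 * Real.pi * (2 * z ^ 1)) / (z ^ 2) ^ 2 - 2 / Real.pi ^ 2)
            * Real.log (1 - z / Real.pi)
          + (2 * Real.pi / z ^ 2 - 2 * z / Real.pi ^ 2) * -(1 / (Real.pi - z)))
        - (((0 * z ^ 2 - 2 * Real.pi * (2 * z ^ 1)) / (z ^ 2) ^ 2 + 2 / Real.pi ^ 2)
            * Real.log (1 + z / Real.pi)
          + (2 * Real.pi / z ^ 2 + 2 * z / Real.pi ^ 2) * (1 / (Real.pi + z)))) z := hbig
  convert this using 1
  unfold Th2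
  field_simp
  ring

lemma contAt_logm {z : ℝ} (hz : z < Real.pi) :
    ContinuousAt (fun z => Real.log (1 - z / Real.pi)) z :=
  (hasDerivAt_logm hz).continuousAt

lemma contAt_logp {z : ℝ} (hz : -Real.pi < z) :
    ContinuousAt (fun z => Real.log (1 + z / Real.pi)) z :=
  (hasDerivAt_logp hz).continuousAt

lemma deriv_Th_eq {z : ℝ} (h0 : 0 < z) (hπ : z < Real.pi) : deriv Th z = Th1 z :=
  (hasDerivAt_Th h0 hπ).deriv

lemma deriv2_Th_eq {z : ℝ} (h0 : 0 < z) (hπ : z < Real.pi) :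
    deriv (deriv Th) z = Th2 z := by
  have h1 : deriv Th =ᶠ[nhds z] Th1 := by
    filter_upwards [isOpen_Ioo.mem_nhds (show z ∈ Ioo 0 Real.pi from ⟨h0, hπ⟩)] with w hw
    exact (hasDerivAt_Th hw.1 hw.2).deriv
  rw [h1.deriv_eq]
  exact (hasDerivAt_Th1 h0 hπ).deriv

lemma ode_Th {z : ℝ} (h0 : 0 < z) (hπ : z < Real.pi) :
    Real.pi ^ 2 / 6 * (deriv (deriv Th) z + 2 / z * deriv Th z) =
      6 / Real.pi ^ 2 * (7 * Real.pi ^ 2 / 18 - 2 * Real.pi ^ 2 / 3 * Real.log 2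
        + Real.pi ^ 2 / 6 * Real.log (Real.pi ^ 2 / 6))
      - Real.log (1 - z ^ 2 / Real.pi ^ 2) - Real.log (Real.pi ^ 2 / 6) := by
  have hz : z ≠ 0 := ne_of_gt h0
  have hp : Real.pi ≠ 0 := Real.pi_ne_zero
  have hmz : Real.pi - z ≠ 0 := sub_ne_zero.mpr (ne_of_gt hπ)
  have hpz : Real.pi + z ≠ 0 := by positivity
  have hm0 : (0:ℝ) < 1 - z / Real.pi := by
    rw [sub_pos, div_lt_one Real.pi_pos]; exact hπ
  have hp0 : (0:ℝ) < 1 + z / Real.pi := by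
    have : 0 < z / Real.pi := by positivity
    linarith
  have hfact : (1 : ℝ) - z ^ 2 / Real.pi ^ 2 = (1 - z / Real.pi) * (1 + z / Real.pi) := by
    field_simp; ring
  rw [deriv2_Th_eq h0 hπ, deriv_Th_eq h0 hπ, hfact,
    Real.log_mul (ne_of_gt hm0) (ne_of_gt hp0)]
  unfold Th1 Th2
  field_simp
  ring

lemma tendsto_Th_zero : Tendsto Th (nhdsWithin 0 (Ioi 0)) (nhds 0) := by
  have hp := Real.pi_pos
  have hpne := Real.pi_ne_zero
  set f : ℝ → ℝ := fun z => Real.log (1 + z / Real.pi) - Real.log (1 - z / Real.pi) with hf_def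
  have hf : HasDerivAt f (2 / Real.pi) 0 := by
    have := (hasDerivAt_logp (z := 0) (by linarith)).sub (hasDerivAt_logm (z := 0) hp)
    refine this.congr_deriv ?_
    field_simp
    ring
  have hslope : Tendsto (fun z => f z / z) (nhdsWithin 0 (Ioi 0)) (nhds (2 / Real.pi)) := by
    have h := hasDerivAt_iff_tendsto_slope.mp hf
    have h2 := h.mono_left (nhdsWithin_mono 0 (fun x hx => ne_of_gt hx))
    refine h2.congr fun z => ?_
    rw [slope_def_field]
    simp [f]
  set g : ℝ → ℝ := fun z => -4 + 4 * z ^ 2 / Real.pi ^ 2 * (1 - Real.log 2)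
    + (3 - z ^ 2 / Real.pi ^ 2) * (Real.log (1 - z / Real.pi) + Real.log (1 + z / Real.pi))
    with hg_def
  have hgc : ContinuousAt g 0 := by
    have c1 := contAt_logm (show (0:ℝ) < Real.pi from hp)
    have c2 := contAt_logp (z := 0) (by linarith)
    exact (continuousAt_const.add (by fun_prop)).add ((by fun_prop :
      ContinuousAt (fun z : ℝ => 3 - z ^ 2 / Real.pi ^ 2) 0).mul (c1.add c2))
  have hg0 : g 0 = -4 := by simp [g]
  have hgt : Tendsto g (nhdsWithin 0 (Ioi 0)) (nhds (-4)) := by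
    rw [← hg0]
    exact hgc.tendsto.mono_left nhdsWithin_le_nhds
  have hcomb := hgt.add (hslope.const_mul (2 * Real.pi))
  have hval : (-4 : ℝ) + 2 * Real.pi * (2 / Real.pi) = 0 := by field_simp; ring
  rw [hval] at hcomb
  refine hcomb.congr' ?_
  filter_upwards [self_mem_nhdsWithin] with z hz
  have hzne : z ≠ 0 := ne_of_gt hz
  simp only [g, f, Th]
  field_simp
  ring

lemma tendsto_derivTh_zero : Tendsto (deriv Th) (nhdsWithin 0 (Ioi 0)) (nhds 0) := by
  have hp := Real.pi_pos
  have hpne := Real.pi_ne_zero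
  have hIoo : Ioo (0:ℝ) Real.pi ∈ nhdsWithin (0:ℝ) (Ioi 0) :=
    Ioo_mem_nhdsGT_of_mem ⟨le_refl 0, hp⟩
  set h : ℝ → ℝ := fun z => 2 * z / Real.pi + Real.log (1 - z / Real.pi)
    - Real.log (1 + z / Real.pi) with hh_def
  have hh' : ∀ᶠ z in nhdsWithin (0:ℝ) (Ioi 0), HasDerivAt h
      (2 * 1 / Real.pi + -(1 / (Real.pi - z)) - 1 / (Real.pi + z)) z := by
    filter_upwards [hIoo] with z hz
    exact ((((hasDerivAt_id z).const_mul 2).div_const Real.pi).add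
      (hasDerivAt_logm hz.2)).sub (hasDerivAt_logp (z := z) (by linarith [hz.1]))
  have hgg' : ∀ᶠ z in nhdsWithin (0:ℝ) (Ioi 0),
      HasDerivAt (fun z : ℝ => z ^ 2) (2 * z) z :=
    Filter.Eventually.of_forall fun z => by simpa using hasDerivAt_pow 2 z
  have hg'ne : ∀ᶠ z in nhdsWithin (0:ℝ) (Ioi 0), 2 * z ≠ 0 := by
    filter_upwards [self_mem_nhdsWithin] with z hz
    have : (0:ℝ) < z := hz
    positivity
  have hfa : Tendsto h (nhdsWithin 0 (Ioi 0)) (nhds 0) := by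
    have c1 := contAt_logm (show (0:ℝ) < Real.pi from hp)
    have c2 := contAt_logp (z := 0) (by linarith)
    have hc : ContinuousAt h 0 := ((by fun_prop :
      ContinuousAt (fun z : ℝ => 2 * z / Real.pi) 0).add c1).sub c2
    have h0 : h 0 = 0 := by simp [h]
    have h2 : Tendsto h (nhdsWithin 0 (Ioi 0)) (nhds (h 0)) :=
      hc.tendsto.mono_left nhdsWithin_le_nhds
    rwa [h0] at h2
  have hga : Tendsto (fun z : ℝ => z ^ 2) (nhdsWithin 0 (Ioi 0)) (nhds 0) := by
    have : Tendsto (fun z : ℝ => z ^ 2) (nhds 0) (nhds ((0:ℝ) ^ 2)) :=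
      (continuous_pow 2).tendsto 0
    simpa using this.mono_left nhdsWithin_le_nhds
  have hdiv : Tendsto (fun z => (2 * 1 / Real.pi + -(1 / (Real.pi - z)) - 1 / (Real.pi + z))
      / (2 * z)) (nhdsWithin 0 (Ioi 0)) (nhds 0) := by
    have hq : ContinuousAt (fun z : ℝ => -(z / (Real.pi * ((Real.pi - z) * (Real.pi + z))))) 0 := by
      refine ContinuousAt.neg (ContinuousAt.div continuousAt_id (by fun_prop) ?_)
      simp
    have hqt : Tendsto (fun z : ℝ => -(z / (Real.pi * ((Real.pi - z) * (Real.pi + z)))))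
        (nhdsWithin 0 (Ioi 0)) (nhds 0) := by
      have h2 : Tendsto (fun z : ℝ => -(z / (Real.pi * ((Real.pi - z) * (Real.pi + z)))))
          (nhdsWithin 0 (Ioi 0))
          (nhds (-((0:ℝ) / (Real.pi * ((Real.pi - 0) * (Real.pi + 0)))))) :=
        hq.tendsto.mono_left nhdsWithin_le_nhds
      simpa using h2
    refine hqt.congr' ?_
    filter_upwards [hIoo] with z hz
    have hzne : z ≠ 0 := ne_of_gt hz.1
    have hmz : Real.pi - z ≠ 0 := sub_ne_zero.mpr (ne_of_gt hz.2)
    have hpz : Real.pi + z ≠ 0 := by have := hz.1; positivity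
    field_simp
    ring
  have hl := HasDerivAt.lhopital_zero_nhdsGT hh' hgg' hg'ne hfa hga hdiv
  set p : ℝ → ℝ := fun z => 8 * z * (1 - Real.log 2) / Real.pi ^ 2 - 2 * z / Real.pi ^ 2
    - 2 * z / Real.pi ^ 2 * (Real.log (1 - z / Real.pi) + Real.log (1 + z / Real.pi))
    with hp_def
  have hpt : Tendsto p (nhdsWithin 0 (Ioi 0)) (nhds 0) := by
    have c1 := contAt_logm (show (0:ℝ) < Real.pi from hp)
    have c2 := contAt_logp (z := 0) (by linarith)
    have hc : ContinuousAt p 0 := (((by fun_prop :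
      ContinuousAt (fun z : ℝ => 8 * z * (1 - Real.log 2) / Real.pi ^ 2) 0).sub
      (by fun_prop)).sub ((by fun_prop :
        ContinuousAt (fun z : ℝ => 2 * z / Real.pi ^ 2) 0).mul (c1.add c2)))
    have h0 : p 0 = 0 := by simp [p]
    have h2 : Tendsto p (nhdsWithin 0 (Ioi 0)) (nhds (p 0)) :=
      hc.tendsto.mono_left nhdsWithin_le_nhds
    rwa [h0] at h2
  have hcomb := hpt.add (hl.const_mul (2 * Real.pi))
  rw [show (0:ℝ) + 2 * Real.pi * 0 = 0 by ring] at hcomb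
  refine hcomb.congr' ?_
  filter_upwards [hIoo] with z hz
  have hzne : z ≠ 0 := ne_of_gt hz.1
  rw [deriv_Th_eq hz.1 hz.2]
  simp only [p, h, Th1]
  field_simp
  ring

lemma tendsto_Th_pi : Tendsto Th (nhdsWithin Real.pi (Iio Real.pi)) (nhds 0) := by
  have hp := Real.pi_pos
  have hpne := Real.pi_ne_zero
  set r : ℝ → ℝ := fun z => -4 + 4 * z ^ 2 / Real.pi ^ 2 * (1 - Real.log 2)
    + (3 + 2 * Real.pi / z - z ^ 2 / Real.pi ^ 2) * Real.log (1 + z / Real.pi) with hr_def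
  have hrc : ContinuousAt r Real.pi := by
    have c2 := contAt_logp (z := Real.pi) (by linarith)
    have hcoef : ContinuousAt (fun z : ℝ => 3 + 2 * Real.pi / z - z ^ 2 / Real.pi ^ 2)
        Real.pi :=
      ((continuousAt_const.div continuousAt_id hpne).const_add 3).sub
        (ContinuousAt.div_const ((continuous_pow 2).continuousAt) _)
    exact (continuousAt_const.add (by fun_prop)).add (hcoef.mul c2)
  have hr0 : r Real.pi = 0 := by
    have h1 : Real.pi / Real.pi = 1 := div_self hpne
    have h2 : Real.pi ^ 2 / Real.pi ^ 2 = 1 := div_self (pow_ne_zero 2 hpne)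
    simp only [r, h1, h2]
    rw [show (1:ℝ) + 1 = 2 by norm_num]
    field_simp
    ring
  have hrt : Tendsto r (nhdsWithin Real.pi (Iio Real.pi)) (nhds 0) := by
    rw [← hr0]
    exact hrc.tendsto.mono_left nhdsWithin_le_nhds
  have hmap : Tendsto (fun z : ℝ => 1 - z / Real.pi) (nhdsWithin Real.pi (Iio Real.pi))
      (nhdsWithin 0 (Ioi 0)) := by
    apply tendsto_nhdsWithin_of_tendsto_nhds_of_eventually_within
    · have hc : ContinuousAt (fun z : ℝ => 1 - z / Real.pi) Real.pi := by fun_prop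
      have hc2 : Tendsto (fun z : ℝ => 1 - z / Real.pi) (nhds Real.pi)
          (nhds (1 - Real.pi / Real.pi)) := hc.tendsto
      rw [div_self hpne, sub_self] at hc2
      exact hc2.mono_left nhdsWithin_le_nhds
    · filter_upwards [self_mem_nhdsWithin] with z hz
      have : z < Real.pi := hz
      have : 0 < 1 - z / Real.pi := by rw [sub_pos, div_lt_one hp]; exact this
      exact this
  have hlog2 : Tendsto (fun t : ℝ => Real.log t * t ^ 2) (nhdsWithin 0 (Ioi 0)) (nhds 0) := by
    have := tendsto_log_mul_rpow_nhdsGT_zero (show (0:ℝ) < 2 by norm_num)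
    refine this.congr' ?_
    filter_upwards [self_mem_nhdsWithin] with t ht
    rw [show (2:ℝ) = ((2:ℕ):ℝ) by norm_num, Real.rpow_natCast]
  have hfac : Tendsto (fun t : ℝ => -(3 - t) / (1 - t)) (nhdsWithin 0 (Ioi 0))
      (nhds (-3)) := by
    have hc : ContinuousAt (fun t : ℝ => -(3 - t) / (1 - t)) 0 :=
      ContinuousAt.div (by fun_prop) (by fun_prop) (by norm_num)
    have h2 : Tendsto (fun t : ℝ => -(3 - t) / (1 - t)) (nhdsWithin 0 (Ioi 0))
        (nhds (-((3:ℝ) - 0) / (1 - 0))) := hc.tendsto.mono_left nhdsWithin_le_nhds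
    simpa using h2
  have hmain := (hlog2.mul hfac).comp hmap
  rw [show (0:ℝ) * (-3) = 0 by ring] at hmain
  have hcomb := hrt.add hmain
  rw [show (0:ℝ) + 0 = 0 by ring] at hcomb
  refine hcomb.congr' ?_
  filter_upwards [Ioo_mem_nhdsLT_of_mem (show Real.pi ∈ Ioc 0 Real.pi from
    ⟨hp, le_refl _⟩)] with z hz
  have hzne : z ≠ 0 := ne_of_gt hz.1
  simp only [r, Th, Function.comp]
  field_simp
  rw [sub_sub_cancel]
  field_simp
  ring

/-- First-order scaled delta expansion solution at `n = 0`: the explicit function `Θ₀⁽¹⁾`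
satisfies `(π²/6)·(Θ₀⁽¹⁾'' + (2/z)·Θ₀⁽¹⁾') = (6/π²)·S₀⁽¹⁾ − ln(1 − z²/π²) − ln(π²/6)`
on `(0, π)`, with `Θ₀⁽¹⁾(z) → 0` and `Θ₀⁽¹⁾'(z) → 0` as `z → 0⁺` and `Θ₀⁽¹⁾(z) → 0`
as `z → π⁻`, where `S₀⁽¹⁾ = 7π²/18 − (2π²/3)·ln 2 + (π²/6)·ln(π²/6)`. -/
theorem scaled_delta_expansion_first_order_n0 :
    let S01 : ℝ := 7 * Real.pi ^ 2 / 18 - 2 * Real.pi ^ 2 / 3 * Real.log 2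
      + Real.pi ^ 2 / 6 * Real.log (Real.pi ^ 2 / 6)
    let Θ : ℝ → ℝ := fun z =>
      -4 + 4 * z ^ 2 / Real.pi ^ 2 * (1 - Real.log 2)
        + (3 - 2 * Real.pi / z - z ^ 2 / Real.pi ^ 2) * Real.log (1 - z / Real.pi)
        + (3 + 2 * Real.pi / z - z ^ 2 / Real.pi ^ 2) * Real.log (1 + z / Real.pi)
    (∀ z ∈ Set.Ioo (0 : ℝ) Real.pi,
      Real.pi ^ 2 / 6 * (deriv (deriv Θ) z + 2 / z * deriv Θ z) =
        6 / Real.pi ^ 2 * S01 - Real.log (1 - z ^ 2 / Real.pi ^ 2)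
          - Real.log (Real.pi ^ 2 / 6)) ∧
    Filter.Tendsto Θ (nhdsWithin 0 (Set.Ioi 0)) (nhds 0) ∧
    Filter.Tendsto (deriv Θ) (nhdsWithin 0 (Set.Ioi 0)) (nhds 0) ∧
    Filter.Tendsto Θ (nhdsWithin Real.pi (Set.Iio Real.pi)) (nhds 0) := by
  intro S01 Θ
  have hΘ : Θ = Th := rfl
  refine ⟨fun z hz => ?_, ?_, ?_, ?_⟩
  · rw [hΘ]; exact ode_Th hz.1 hz.2
  · rw [hΘ]; exact tendsto_Th_zero
  · rw [hΘ]; exact tendsto_derivTh_zero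
  · rw [hΘ]; exact tendsto_Th_pi
end

section
/- Sign of the first-order correction about n = 0: the function Θ₀⁽¹⁾(z) = −4 + (4z²/π²)·(1 − ln 2) + (3 − 2π/z − z²/π²)·ln(1 − z/π) + (3 + 2π/z − z²/π²)·ln(1 + z/π) satisfies Θ₀⁽¹⁾(z) ≤ 0 for all z ∈ (0, π). -/
open Filter Real Finset

lemma partial_sum_d (N : ℕ) :
    ∑ n ∈ range N, (3:ℝ)/(((n:ℝ)+1)*((n:ℝ)+2)*(2*(n:ℝ)+5))
      = (harmonic N : ℝ) - 5*(harmonic (N+1) : ℝ) + 4*(harmonic (2*N+3) : ℝ) - 7/3 := by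
  induction N with
  | zero => simp [harmonic_succ]; norm_num [harmonic_succ]
  | succ N ih =>
      rw [Finset.sum_range_succ, ih]
      have h1 : (2*(N+1)+3) = (2*N+3)+1+1 := by ring
      rw [h1, harmonic_succ (2*N+3+1), harmonic_succ (2*N+3), harmonic_succ (N+1), harmonic_succ N]
      push_cast
      have hN1 : ((N:ℝ)+1) ≠ 0 := by positivity
      have hN2 : ((N:ℝ)+2) ≠ 0 := by positivity
      have h5 : (2*(N:ℝ)+5) ≠ 0 := by positivity
      have h4 : (2*(N:ℝ)+4) ≠ 0 := by positivity
      field_simp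
      ring

lemma log_combo_tendsto :
    Tendsto (fun N : ℕ => Real.log N - 5*Real.log (N+1) + 4*Real.log (2*N+3)) atTop
      (nhds (4*Real.log 2)) := by
  have hs : Tendsto (fun N : ℕ => ((2*(N:ℝ)+3)/((N:ℝ)+1))) atTop (nhds 2) := by
    have := (tendsto_const_nhds (x := (2:ℝ)) (f := atTop (α := ℕ))).add
      tendsto_one_div_add_atTop_nhds_zero_nat
    rw [add_zero] at this
    apply this.congr
    intro n
    have : ((n:ℝ)+1) ≠ 0 := by positivity
    field_simp
    ring
  have hr : Tendsto (fun N : ℕ => ((N:ℝ)/((N:ℝ)+1))) atTop (nhds 1) :=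
    tendsto_natCast_div_add_atTop (1:ℝ)
  have base : Tendsto (fun N : ℕ => ((N:ℝ)/((N:ℝ)+1)) * ((2*(N:ℝ)+3)/((N:ℝ)+1))^4)
      atTop (nhds (1 * 2^4)) := hr.mul (hs.pow 4)
  have hlog : Tendsto (fun N : ℕ =>
      Real.log (((N:ℝ)/((N:ℝ)+1)) * ((2*(N:ℝ)+3)/((N:ℝ)+1))^4)) atTop
      (nhds (Real.log (1*2^4))) :=
    ((Real.continuousAt_log (by norm_num)).tendsto).comp base
  have hval : Real.log (1*2^4) = 4 * Real.log 2 := by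
    rw [one_mul, Real.log_pow]; push_cast; ring
  rw [hval] at hlog
  apply hlog.congr'
  filter_upwards [eventually_ge_atTop 1] with N hN
  have hN0 : (N:ℝ) ≠ 0 := by positivity
  have hN1 : ((N:ℝ)+1) ≠ 0 := by positivity
  have h3 : (2*(N:ℝ)+3) ≠ 0 := by positivity
  rw [Real.log_mul (by positivity) (by positivity), Real.log_pow,
    Real.log_div hN0 hN1, Real.log_div h3 hN1]
  push_cast
  ring

lemma summable_d : Summable (fun n : ℕ => (3:ℝ)/(((n:ℝ)+1)*((n:ℝ)+2)*(2*(n:ℝ)+5))) := by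
  have hs : Summable (fun n : ℕ => (3:ℝ)/((n:ℝ)+1)^2) := by
    have h0 : Summable (fun n : ℕ => (1:ℝ)/(n:ℝ)^2) := summable_one_div_nat_pow.2 one_lt_two
    have := ((summable_nat_add_iff 1).2 h0).mul_left (3:ℝ)
    apply this.congr
    intro n; push_cast; ring
  apply Summable.of_nonneg_of_le (fun n => by positivity) _ hs
  intro n
  apply div_le_div_of_nonneg_left (by norm_num) (by positivity)
  nlinarith [sq_nonneg ((n:ℝ)+1), Nat.cast_nonneg (α := ℝ) n]

lemma hasSum_d : HasSum (fun n : ℕ => (3:ℝ)/(((n:ℝ)+1)*((n:ℝ)+2)*(2*(n:ℝ)+5)))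
    (4*Real.log 2 - 7/3) := by
  rw [summable_d.hasSum_iff_tendsto_nat]
  have hlog : Tendsto (fun N : ℕ => Real.log N - 5*Real.log (N+1) + 4*Real.log (2*N+3)) atTop
      (nhds (4*Real.log 2)) := log_combo_tendsto
  have T1 := Real.tendsto_harmonic_sub_log
  have T2 : Tendsto (fun N : ℕ => (harmonic (N+1) : ℝ) - Real.log (N+1)) atTop
      (nhds Real.eulerMascheroniConstant) := by
    have := T1.comp (tendsto_add_atTop_nat 1)
    apply this.congr; intro n; simp
  have T3 : Tendsto (fun N : ℕ => (harmonic (2*N+3) : ℝ) - Real.log (2*N+3)) atTop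
      (nhds Real.eulerMascheroniConstant) := by
    have hmono : Tendsto (fun N : ℕ => 2*N+3) atTop atTop :=
      StrictMono.tendsto_atTop (fun a b h => by omega)
    have := T1.comp hmono
    apply this.congr; intro n; simp [Function.comp]
  have total := ((T1.sub (T2.const_mul 5)).add (T3.const_mul 4)).add hlog
  have : Tendsto (fun N : ℕ => (harmonic N : ℝ) - 5*(harmonic (N+1) : ℝ)
      + 4*(harmonic (2*N+3) : ℝ) - 7/3) atTop
      (nhds ((Real.eulerMascheroniConstant - 5*Real.eulerMascheroniConstant
        + 4*Real.eulerMascheroniConstant) + 4*Real.log 2 - 7/3)) := by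
    have := total.sub_const (7/3)
    apply this.congr
    intro n
    push_cast
    ring
  have hval : (Real.eulerMascheroniConstant - 5*Real.eulerMascheroniConstant
      + 4*Real.eulerMascheroniConstant) + 4*Real.log 2 - 7/3 = 4*Real.log 2 - 7/3 := by ring
  rw [hval] at this
  apply this.congr
  intro n
  exact (partial_sum_d n).symm



lemma key (x : ℝ) (hx0 : 0 < x) (hx1 : x < 1) :
    -4 + 4*x^2*(1 - Real.log 2) + (3 - 2/x - x^2)*Real.log (1-x)
      + (3 + 2/x - x^2)*Real.log (1+x) ≤ 0 := by
  set t : ℝ := x^2 with ht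
  have ht0 : 0 < t := by positivity
  have ht1 : t < 1 := by nlinarith
  have htabs : |t| < 1 := by rw [abs_of_pos ht0]; exact ht1
  have hxabs : |x| < 1 := by rw [abs_of_pos hx0]; exact hx1
  have hxne : x ≠ 0 := ne_of_gt hx0
  have h1 := Real.hasSum_pow_div_log_of_abs_lt_one htabs
  have neg3 := h1.mul_left (-3)
  set g : ℕ → ℝ := fun n => if n = 0 then 0 else t^(n+1)/(n:ℝ) with hg
  have hA2 : HasSum (fun n : ℕ => g (n+1)) (t * (-Real.log (1-t))) := by
    have he : (fun n : ℕ => t * (t^(n+1)/((n:ℝ)+1))) = fun n : ℕ => g (n+1) := by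
      funext n
      simp only [hg, Nat.succ_ne_zero, if_false]
      push_cast
      rw [pow_succ]
      ring
    exact he ▸ h1.mul_left t
  have hgsum : HasSum g (t * (-Real.log (1-t))) := by
    have := (hasSum_nat_add_iff (f := g) 1).1 hA2
    simpa [hg] using this
  have h2 := Real.hasSum_log_sub_log_of_abs_lt_one hxabs
  have hB : HasSum (fun k : ℕ => 4*t^k/(2*(k:ℝ)+1))
      ((2/x) * (Real.log (1+x) - Real.log (1-x))) := by
    have he : (fun k : ℕ => (2/x) * (2 * (1/(2*(k:ℝ)+1)) * x^(2*k+1)))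
        = fun k : ℕ => 4*t^k/(2*(k:ℝ)+1) := by
      funext k
      rw [pow_succ, pow_mul, ht]
      have : (2*(k:ℝ)+1) ≠ 0 := by positivity
      field_simp
      ring
    exact he ▸ h2.mul_left (2/x)
  have hB' : HasSum (fun n : ℕ => 4*t^(n+1)/(2*(n:ℝ)+3))
      ((2/x) * (Real.log (1+x) - Real.log (1-x)) - 4) := by
    have hB2 : HasSum (fun k : ℕ => 4*t^k/(2*(k:ℝ)+1))
        (((2/x) * (Real.log (1+x) - Real.log (1-x)) - 4)
          + ∑ i ∈ Finset.range 1, 4*t^i/(2*(i:ℝ)+1)) := by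
      have hs1 : ((2/x) * (Real.log (1+x) - Real.log (1-x)) - 4)
          + ∑ i ∈ Finset.range 1, 4*t^i/(2*(i:ℝ)+1)
          = (2/x) * (Real.log (1+x) - Real.log (1-x)) := by
        simp
      rw [hs1]; exact hB
    have h3 := (hasSum_nat_add_iff (f := fun k : ℕ => 4*t^k/(2*(k:ℝ)+1)) 1).2 hB2
    have he2 : (fun n : ℕ => 4*t^(n+1)/(2*((n+1:ℕ):ℝ)+1))
        = (fun n : ℕ => 4*t^(n+1)/(2*(n:ℝ)+3)) := by
      funext n; push_cast; ring_nf
    exact he2 ▸ h3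
  set base : ℕ → ℝ := fun n =>
    -3 * (t^(n+1)/((n:ℝ)+1)) + g n + 4*t^(n+1)/(2*(n:ℝ)+3) with hbase
  have hC : HasSum base (-3 * (-Real.log (1-t)) + t * (-Real.log (1-t))
      + ((2/x) * (Real.log (1+x) - Real.log (1-x)) - 4)) := (neg3.add hgsum).add hB'
  set f : ℕ → ℝ := Function.update base 0 ((7/3 - 4*Real.log 2)*t) with hf
  have hF : HasSum f ((7/3 - 4*Real.log 2)*t - base 0
      + (-3 * (-Real.log (1-t)) + t * (-Real.log (1-t))
      + ((2/x) * (Real.log (1+x) - Real.log (1-x)) - 4))) := hC.update 0 _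
  -- identify the sum with the target expression
  have hlog : Real.log (1-t) = Real.log (1-x) + Real.log (1+x) := by
    rw [ht, show (1:ℝ) - x^2 = (1-x)*(1+x) by ring,
      Real.log_mul (by linarith) (by linarith)]
  have hbase0 : base 0 = -3*t + 4*t/3 := by
    simp [hbase, hg]
  have hEeq : -4 + 4*x^2*(1 - Real.log 2) + (3 - 2/x - x^2)*Real.log (1-x)
      + (3 + 2/x - x^2)*Real.log (1+x)
      = (7/3 - 4*Real.log 2)*t - base 0
      + (-3 * (-Real.log (1-t)) + t * (-Real.log (1-t))
      + ((2/x) * (Real.log (1+x) - Real.log (1-x)) - 4)) := by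
    rw [hbase0, hlog, ht]
    field_simp
    ring
  rw [hEeq]
  -- now bound the sum
  have hsum0 := hF.tsum_eq
  have hsplit := Summable.tsum_eq_zero_add hF.summable
  have hf0 : f 0 = (7/3 - 4*Real.log 2)*t := by simp [hf]
  have hterm : ∀ n : ℕ, f (n+1) = 3*t^(n+2)/(((n:ℝ)+1)*((n:ℝ)+2)*(2*(n:ℝ)+5)) := by
    intro n
    have : f (n+1) = base (n+1) := Function.update_of_ne (Nat.succ_ne_zero n) _ _
    rw [this]
    simp only [hbase, hg, Nat.succ_ne_zero, if_false]
    push_cast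
    have h1' : ((n:ℝ)+1) ≠ 0 := by positivity
    have h2' : ((n:ℝ)+1+1) ≠ 0 := by positivity
    have h3' : (2*((n:ℝ)+1)+3) ≠ 0 := by positivity
    field_simp
    ring
  have hbound : ∀ n : ℕ, f (n+1) ≤ t^2 * ((3:ℝ)/(((n:ℝ)+1)*((n:ℝ)+2)*(2*(n:ℝ)+5))) := by
    intro n
    rw [hterm n]
    have hden : (0:ℝ) < ((n:ℝ)+1)*((n:ℝ)+2)*(2*(n:ℝ)+5) := by positivity
    rw [div_le_iff₀ hden] at *
    have htp : t^(n+2) ≤ t^2 := by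
      calc t^(n+2) = t^2 * t^n := by ring
      _ ≤ t^2 * 1 := by
          apply mul_le_mul_of_nonneg_left _ (by positivity)
          exact pow_le_one₀ (le_of_lt ht0) (le_of_lt ht1)
      _ = t^2 := by ring
    calc 3*t^(n+2) ≤ 3*t^2 := by linarith
    _ = t^2 * 3 := by ring
    _ ≤ (t^2 * (3 / (((n:ℝ)+1)*((n:ℝ)+2)*(2*(n:ℝ)+5)))) * (((n:ℝ)+1)*((n:ℝ)+2)*(2*(n:ℝ)+5)) := by
        rw [mul_assoc, div_mul_cancel₀]
        exact ne_of_gt hden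
  have hsummable_shift : Summable (fun n : ℕ => f (n+1)) :=
    (summable_nat_add_iff 1).2 hF.summable
  have hD := hasSum_d.mul_left (t^2)
  have htail : ∑' n : ℕ, f (n+1) ≤ t^2 * (4*Real.log 2 - 7/3) := by
    calc ∑' n : ℕ, f (n+1) ≤ ∑' n : ℕ, t^2 * ((3:ℝ)/(((n:ℝ)+1)*((n:ℝ)+2)*(2*(n:ℝ)+5))) :=
      Summable.tsum_le_tsum hbound hsummable_shift hD.summable
    _ = t^2 * (4*Real.log 2 - 7/3) := hD.tsum_eq
  have hfinal : (7/3 - 4*Real.log 2)*t - base 0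
      + (-3 * (-Real.log (1-t)) + t * (-Real.log (1-t))
      + ((2/x) * (Real.log (1+x) - Real.log (1-x)) - 4))
      = f 0 + ∑' n : ℕ, f (n+1) := by rw [← hsplit, hsum0]
  rw [hfinal, hf0]
  have hc : 7/3 - 4*Real.log 2 < 0 := by
    have := Real.log_two_gt_d9
    nlinarith
  nlinarith [htail, mul_pos ht0 (sub_pos.2 ht1)]


/-- Sign of the first-order correction about `n = 0`: the function `Θ₀⁽¹⁾` is nonpositive
on `(0, π)`. -/
theorem first_order_correction_n0_nonpos :
    ∀ z ∈ Set.Ioo (0 : ℝ) Real.pi,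
      -4 + 4 * z ^ 2 / Real.pi ^ 2 * (1 - Real.log 2)
        + (3 - 2 * Real.pi / z - z ^ 2 / Real.pi ^ 2) * Real.log (1 - z / Real.pi)
        + (3 + 2 * Real.pi / z - z ^ 2 / Real.pi ^ 2) * Real.log (1 + z / Real.pi) ≤ 0 := by
  intro z hz
  obtain ⟨hz0, hzpi⟩ := hz
  have hpi : (0:ℝ) < Real.pi := Real.pi_pos
  have hx0 : 0 < z / Real.pi := div_pos hz0 hpi
  have hx1 : z / Real.pi < 1 := (div_lt_one hpi).2 hzpi
  have h := key (z / Real.pi) hx0 hx1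
  have e1 : (z / Real.pi)^2 = z^2 / Real.pi^2 := div_pow z Real.pi 2
  have e2 : 2 / (z / Real.pi) = 2 * Real.pi / z := by
    rw [div_div_eq_mul_div]
  rw [e1, e2] at h
  calc -4 + 4 * z ^ 2 / Real.pi ^ 2 * (1 - Real.log 2)
        + (3 - 2 * Real.pi / z - z ^ 2 / Real.pi ^ 2) * Real.log (1 - z / Real.pi)
        + (3 + 2 * Real.pi / z - z ^ 2 / Real.pi ^ 2) * Real.log (1 + z / Real.pi)
      = -4 + 4*(z^2/Real.pi^2)*(1 - Real.log 2)
        + (3 - 2*Real.pi/z - z^2/Real.pi^2)*Real.log (1 - z/Real.pi)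
        + (3 + 2*Real.pi/z - z^2/Real.pi^2)*Real.log (1 + z/Real.pi) := by ring
    _ ≤ 0 := h
end

section
/- Eigenvalue condition determining S₁⁽⁰⁾: the integral identity ∫₀^π sin²(t) · ln(sin(t)/t) dt = (π/2)·(3/2 − Si(2π)/(2π) − ln(2π)) holds, where Si(x) = ∫₀^x (sin t)/t dt. Equivalently, setting S₁⁽⁰⁾ = 2π·exp(Si(2π)/(2π) − 3/2), one has ∫₀^π sin²(t)·[ln S₁⁽⁰⁾ + ln(sin(t)/t)] dt = 0. -/
open Real MeasureTheory Set intervalIntegral Filter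

-- FTC with one-sided continuity at endpoints
lemma my_ftc {F f : ℝ → ℝ} {a b : ℝ} (hab : a ≤ b) (hF : ContinuousOn F (Icc a b))
    (hd : ∀ x ∈ Ioo a b, HasDerivAt F (f x) x) (hi : IntervalIntegrable f volume a b) :
    ∫ t in a..b, f t = F b - F a :=
  integral_eq_sub_of_hasDeriv_right_of_le hab hF (fun x hx => (hd x hx).hasDerivWithinAt) hi

-- log is interval integrable on [0,1]
lemma logInt01 : IntervalIntegrable Real.log volume 0 1 := by
  rw [intervalIntegrable_iff_integrableOn_Ioc_of_le zero_le_one]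
  have h : IntegrableOn (fun x : ℝ => -Real.log x) (Ioc 0 1) volume := by
    apply integrableOn_deriv_of_nonneg (g := fun x => x - x * Real.log x)
    · exact (continuous_id.sub Real.continuous_mul_log).continuousOn
    · intro x hx
      have := ((hasDerivAt_id x).sub (Real.hasDerivAt_mul_log hx.1.ne'))
      exact this.congr_deriv (by ring)
    · intro x hx
      simp only [Left.nonneg_neg_iff]
      exact Real.log_nonpos hx.1.le hx.2.le
  exact h.neg.congr (Filter.Eventually.of_forall (fun x => by simp))

lemma logIntPi : IntervalIntegrable Real.log volume 0 π := by
  exact logInt01.trans (intervalIntegrable_log (by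
    intro h; rw [Set.mem_uIcc] at h
    rcases h with ⟨_, h⟩ | ⟨h, _⟩ <;> linarith [Real.pi_gt_three]))

-- improper integral of log
lemma integral_log_zero (b : ℝ) (hb : 0 < b) (hi : IntervalIntegrable Real.log volume 0 b) :
    ∫ t in (0:ℝ)..b, Real.log t = b * Real.log b - b := by
  have := my_ftc (F := fun t => t * Real.log t - t) (f := Real.log) hb.le
    ((Real.continuous_mul_log.sub continuous_id).continuousOn)
    (fun x hx => by
      have := (Real.hasDerivAt_mul_log hx.1.ne').sub (hasDerivAt_id x)
      exact this.congr_deriv (by ring)) hi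
  simpa using this

-- reflected log integrable
lemma logReflInt : IntervalIntegrable (fun t => Real.log (π - t)) volume 0 π := by
  have h := logIntPi.comp_sub_left π
  simpa using h.symm

lemma sin_lower {x : ℝ} (hx : x ∈ Ioo (0:ℝ) π) : 2/π^2 * (x * (π - x)) ≤ Real.sin x := by
  have hπ := Real.pi_pos
  rcases le_total x (π/2) with h | h
  · have h1 : 2/π * x ≤ Real.sin x := Real.mul_le_sin hx.1.le h
    have h2 : 2/π^2 * (x * (π - x)) ≤ 2/π * x := by
      rw [div_mul_eq_mul_div, div_mul_eq_mul_div, div_le_div_iff₀ (by positivity) hπ]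
      nlinarith [mul_nonneg hπ.le (sq_nonneg x), hx.1, hx.2]
    linarith
  · have h0 : (0:ℝ) ≤ π - x := by linarith [hx.2]
    have h1 : 2/π * (π - x) ≤ Real.sin (π - x) := Real.mul_le_sin h0 (by linarith)
    rw [Real.sin_pi_sub] at h1
    have h2 : 2/π^2 * (x * (π - x)) ≤ 2/π * (π - x) := by
      rw [div_mul_eq_mul_div, div_mul_eq_mul_div, div_le_div_iff₀ (by positivity) hπ]
      nlinarith [mul_nonneg hπ.le (sq_nonneg (π - x)), hx.1, hx.2]
    linarith

-- domination lemma: g bounded by 1 times log sin is interval integrable on [0,π]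
lemma intLogSin {g : ℝ → ℝ} (hg : Measurable g) (hb : ∀ t, |g t| ≤ 1) :
    IntervalIntegrable (fun t => g t * Real.log (Real.sin t)) volume 0 π := by
  have hπ := Real.pi_pos
  rw [intervalIntegrable_iff_integrableOn_Ioc_of_le hπ.le]
  have hbound : IntegrableOn
      (fun t => |Real.log t| + |Real.log (π - t)| + |Real.log (2/π^2)|) (Ioc 0 π) volume := by
    apply Integrable.add
    apply Integrable.add
    · exact ((intervalIntegrable_iff_integrableOn_Ioc_of_le hπ.le).1 logIntPi).abs
    · exact ((intervalIntegrable_iff_integrableOn_Ioc_of_le hπ.le).1 logReflInt).abs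
    · exact integrableOn_const measure_Ioc_lt_top.ne
  apply hbound.mono'
  · exact ((hg.mul (Real.measurable_log.comp Real.measurable_sin))).aestronglyMeasurable
  · rw [ae_restrict_iff' measurableSet_Ioc]
    refine Filter.Eventually.of_forall (fun x hx => ?_)
    rcases eq_or_lt_of_le hx.2 with rfl | hlt
    · simp only [Real.sin_pi, Real.log_zero, mul_zero, norm_zero]
      positivity
    · have hxo : x ∈ Ioo (0:ℝ) π := ⟨hx.1, hlt⟩
      have hsp : 0 < Real.sin x := Real.sin_pos_of_pos_of_lt_pi hxo.1 hxo.2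
      have hlow := sin_lower hxo
      have hprod : (0:ℝ) < 2/π^2 * (x * (π - x)) := by
        have : 0 < x * (π - x) := mul_pos hxo.1 (by linarith [hxo.2])
        positivity
      have hup : Real.log (Real.sin x) ≤ 0 := Real.log_nonpos hsp.le (Real.sin_le_one x)
      have hlo : Real.log (2/π^2) + Real.log x + Real.log (π - x) ≤ Real.log (Real.sin x) := by
        have h5 := Real.log_le_log hprod hlow
        rwa [Real.log_mul (by positivity) (mul_pos hxo.1 (by linarith [hxo.2] : (0:ℝ) < π - x)).ne',
          Real.log_mul hxo.1.ne' (by linarith [hxo.2] : (0:ℝ) < π - x).ne', ← add_assoc] at h5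
      have habs : |Real.log (Real.sin x)| ≤ |Real.log x| + |Real.log (π - x)| + |Real.log (2/π^2)| := by
        rw [abs_of_nonpos hup]
        have e1 : -Real.log x ≤ |Real.log x| := neg_le_abs _
        have e2 : -Real.log (π - x) ≤ |Real.log (π - x)| := neg_le_abs _
        have e3 : -Real.log (2/π^2) ≤ |Real.log (2/π^2)| := neg_le_abs _
        linarith
      calc ‖g x * Real.log (Real.sin x)‖ = |g x| * |Real.log (Real.sin x)| := abs_mul _ _
        _ ≤ 1 * |Real.log (Real.sin x)| :=
            mul_le_mul_of_nonneg_right (hb x) (abs_nonneg _)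
        _ ≤ _ := by rw [one_mul]; exact habs

-- g bounded times log t integrable
lemma intLogT {g : ℝ → ℝ} (hg : Measurable g) (hb : ∀ t, |g t| ≤ 1) :
    IntervalIntegrable (fun t => g t * Real.log t) volume 0 π := by
  have hπ := Real.pi_pos
  rw [intervalIntegrable_iff_integrableOn_Ioc_of_le hπ.le]
  apply (((intervalIntegrable_iff_integrableOn_Ioc_of_le hπ.le).1 logIntPi).abs).mono'
  · exact (hg.mul Real.measurable_log).aestronglyMeasurable
  · refine Filter.Eventually.of_forall (fun x => ?_)
    calc ‖g x * Real.log x‖ = |g x| * |Real.log x| := abs_mul _ _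
      _ ≤ 1 * |Real.log x| := mul_le_mul_of_nonneg_right (hb x) (abs_nonneg _)
      _ = |Real.log x| := one_mul _

lemma intLogSin' : IntervalIntegrable (fun t => Real.log (Real.sin t)) volume 0 π := by
  have := intLogSin (g := fun _ => 1) measurable_const (fun t => by norm_num)
  simpa using this

lemma L_val : ∫ t in (0:ℝ)..π, Real.log (Real.sin t) = -π * Real.log 2 := by
  have hπ := Real.pi_pos
  have hs : IntervalIntegrable (fun t => Real.log (Real.sin t)) volume 0 π := intLogSin'
  have hsub1 : uIcc (0:ℝ) (π/2) ⊆ uIcc (0:ℝ) π := by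
    apply uIcc_subset_uIcc <;> rw [mem_uIcc] <;> [left; left] <;> constructor <;> linarith
  have hsub2 : uIcc (π/2) π ⊆ uIcc (0:ℝ) π := by
    apply uIcc_subset_uIcc <;> rw [mem_uIcc] <;> [left; left] <;> constructor <;> linarith
  have hs1 : IntervalIntegrable (fun t => Real.log (Real.sin t)) volume 0 (π/2) :=
    hs.mono_set hsub1
  have hs2 : IntervalIntegrable (fun t => Real.log (Real.sin t)) volume (π/2) π :=
    hs.mono_set hsub2
  have hc1 : IntervalIntegrable (fun t => Real.log (Real.cos t)) volume 0 (π/2) := by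
    have h := hs1.comp_sub_left (π/2)
    simp only [sub_zero, sub_self, Real.sin_pi_div_two_sub] at h
    exact h.symm
  -- J = ∫ 0..π/2
  set J := ∫ t in (0:ℝ)..(π/2), Real.log (Real.sin t) with hJ
  set L := ∫ t in (0:ℝ)..π, Real.log (Real.sin t) with hL
  -- split
  have hsplit : J + (∫ t in (π/2)..π, Real.log (Real.sin t)) = L :=
    integral_add_adjacent_intervals hs1 hs2
  -- reflection: ∫ π/2..π = J
  have hrefl : (∫ t in (π/2)..π, Real.log (Real.sin t)) = J := by
    have h := integral_comp_sub_left (a := (0:ℝ)) (b := π/2)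
      (fun x => Real.log (Real.sin x)) π
    simp only [Real.sin_pi_sub] at h
    rw [show π - π/2 = π/2 by ring, show π - (0:ℝ) = π by ring] at h
    exact h.symm
  -- K = J
  have hK : (∫ t in (0:ℝ)..(π/2), Real.log (Real.cos t)) = J := by
    have h := integral_comp_sub_left (a := (0:ℝ)) (b := π/2)
      (fun x => Real.log (Real.sin x)) (π/2)
    simp only [Real.sin_pi_div_two_sub, sub_zero, sub_self] at h
    rw [h]
  -- duplication
  have hdup : (∫ x in (0:ℝ)..(π/2), Real.log (Real.sin (2*x))) = 2⁻¹ * L := by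
    have h := integral_comp_mul_left (a := (0:ℝ)) (b := π/2)
      (fun x => Real.log (Real.sin x)) (two_ne_zero)
    rw [h, show (2:ℝ) * (π/2) = π by ring, show (2:ℝ) * 0 = 0 by ring, smul_eq_mul]
  -- a.e. rewrite
  have hae : (∫ x in (0:ℝ)..(π/2), Real.log (Real.sin (2*x)))
      = ∫ x in (0:ℝ)..(π/2), (Real.log 2 + Real.log (Real.sin x) + Real.log (Real.cos x)) := by
    apply intervalIntegral.integral_congr_ae
    have hne : ∀ᵐ (x:ℝ) ∂volume, x ≠ π/2 := by
      rw [ae_iff]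
      have : {x : ℝ | ¬ x ≠ π/2} = {π/2} := by ext x; simp
      rw [this]
      exact measure_singleton _
    filter_upwards [hne] with x hx hmem
    rw [uIoc_of_le (by linarith : (0:ℝ) ≤ π/2)] at hmem
    have hx2 : x < π/2 := lt_of_le_of_ne hmem.2 hx
    have hsp : 0 < Real.sin x := Real.sin_pos_of_pos_of_lt_pi hmem.1 (by linarith)
    have hcp : 0 < Real.cos x := Real.cos_pos_of_mem_Ioo ⟨by linarith [hmem.1], hx2⟩
    rw [Real.sin_two_mul, Real.log_mul (by positivity) hcp.ne',
      Real.log_mul two_ne_zero hsp.ne', add_assoc, ← add_assoc]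
  -- split RHS
  have hsplit2 : (∫ x in (0:ℝ)..(π/2), (Real.log 2 + Real.log (Real.sin x) + Real.log (Real.cos x)))
      = (π/2) * Real.log 2 + J + J := by
    rw [integral_add (intervalIntegrable_const.add hs1) hc1,
      integral_add intervalIntegrable_const hs1, intervalIntegral.integral_const, hK, ← hJ]
    simp [smul_eq_mul]
  have hLJ : L = 2 * J := by rw [← hsplit, hrefl]; ring
  have : 2⁻¹ * L = (π/2) * Real.log 2 + J + J := by rw [← hdup, hae, hsplit2]
  rw [hLJ] at this ⊢
  linarith

lemma intCosLogSin : IntervalIntegrable (fun t => Real.cos (2*t) * Real.log (Real.sin t)) volume 0 π :=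
  intLogSin (Real.measurable_cos.comp (measurable_const_mul 2)) (fun t => Real.abs_cos_le_one _)

lemma C_val : ∫ t in (0:ℝ)..π, Real.cos (2*t) * Real.log (Real.sin t) = -(π/2) := by
  have hπ := Real.pi_pos
  have hint : IntervalIntegrable
      (fun t => Real.cos (2*t) * Real.log (Real.sin t) + Real.cos t ^ 2) volume 0 π :=
    intCosLogSin.add ((continuous_cos.pow 2).intervalIntegrable _ _)
  have hftc : ∫ t in (0:ℝ)..π, (Real.cos (2*t) * Real.log (Real.sin t) + Real.cos t ^ 2)
      = 0 := by
    have := my_ftc (F := fun t => Real.cos t * (Real.sin t * Real.log (Real.sin t)))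
      (f := fun t => Real.cos (2*t) * Real.log (Real.sin t) + Real.cos t ^ 2) hπ.le
      ((Real.continuous_cos.mul (Real.continuous_mul_log.comp Real.continuous_sin)).continuousOn)
      (fun x hx => by
        have hsp : Real.sin x ≠ 0 :=
          (Real.sin_pos_of_pos_of_lt_pi hx.1 hx.2).ne'
        have h1 : HasDerivAt (fun t => Real.sin t * Real.log (Real.sin t))
            ((Real.log (Real.sin x) + 1) * Real.cos x) x :=
          (Real.hasDerivAt_mul_log hsp).comp x (Real.hasDerivAt_sin x)
        have h2 := (Real.hasDerivAt_cos x).mul h1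
        have heq : -Real.sin x * (Real.sin x * Real.log (Real.sin x))
            + Real.cos x * ((Real.log (Real.sin x) + 1) * Real.cos x)
            = Real.cos (2*x) * Real.log (Real.sin x) + Real.cos x ^ 2 := by
          rw [Real.cos_two_mul]
          linear_combination (-Real.log (Real.sin x)) * (Real.sin_sq_add_cos_sq x)
        rw [heq] at h2
        exact h2) hint
    simpa using this
  have hcsq : ∫ t in (0:ℝ)..π, Real.cos t ^ 2 = π/2 := by
    rw [integral_cos_sq]
    simp
  have := integral_add (g := fun t => Real.cos t ^ 2) intCosLogSin ((continuous_cos.pow 2).intervalIntegrable _ _)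
  rw [this] at hftc
  linarith [hftc, hcsq]

lemma intSinc2 : IntervalIntegrable (fun t => Real.sin (2*t)/(2*t)) volume 0 π := by
  have hπ := Real.pi_pos
  rw [intervalIntegrable_iff_integrableOn_Ioc_of_le hπ.le]
  have hc : IntegrableOn (fun _ : ℝ => (1:ℝ)) (Ioc 0 π) volume :=
    integrableOn_const measure_Ioc_lt_top.ne
  apply hc.mono'
  · exact ((Real.measurable_sin.comp (measurable_const_mul 2)).div
      (measurable_const_mul 2)).aestronglyMeasurable
  · refine Filter.Eventually.of_forall (fun x => ?_)
    rcases eq_or_ne x 0 with rfl | hx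
    · norm_num
    · rw [Real.norm_eq_abs, abs_div]
      rw [div_le_one (abs_pos.mpr (mul_ne_zero two_ne_zero hx))]
      exact Real.abs_sin_le_abs

lemma intCosLogT : IntervalIntegrable (fun t => Real.cos (2*t) * Real.log t) volume 0 π :=
  intLogT (Real.measurable_cos.comp (measurable_const_mul 2)) (fun t => Real.abs_cos_le_one _)

lemma D_val : ∫ t in (0:ℝ)..π, Real.cos (2*t) * Real.log t
    = -(2⁻¹ * ∫ u in (0:ℝ)..(2*π), Real.sin u / u) := by
  have hπ := Real.pi_pos
  have hint : IntervalIntegrable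
      (fun t => Real.cos (2*t) * Real.log t + Real.sin (2*t)/(2*t)) volume 0 π :=
    intCosLogT.add intSinc2
  have hcont : ContinuousOn (fun t => Real.sin (2*t)/2 * Real.log t) (Icc 0 π) := by
    intro x hx
    rcases eq_or_ne x 0 with rfl | hxne
    · have hbd : ∀ y : ℝ, ‖Real.sin (2*y)/2 * Real.log y‖ ≤ |y * Real.log y| := by
        intro y
        rw [Real.norm_eq_abs, abs_mul, abs_mul, abs_div]
        apply mul_le_mul_of_nonneg_right _ (abs_nonneg _)
        rw [abs_two, div_le_iff₀ (by norm_num : (0:ℝ) < 2)]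
        calc |Real.sin (2*y)| ≤ |2*y| := Real.abs_sin_le_abs
          _ = |y| * 2 := by rw [abs_mul, abs_two]; ring
      have h0 : Filter.Tendsto (fun y : ℝ => Real.sin (2*y)/2 * Real.log y)
          (nhds 0) (nhds 0) := by
        apply squeeze_zero_norm hbd
        have := (continuous_abs.comp Real.continuous_mul_log).tendsto 0
        simpa [Function.comp_def, abs_mul] using this
      have : Filter.Tendsto (fun t : ℝ => Real.sin (2*t)/2 * Real.log t)
          (nhdsWithin 0 (Icc 0 π))
          (nhds ((fun t : ℝ => Real.sin (2*t)/2 * Real.log t) 0)) := by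
        simpa using h0.mono_left nhdsWithin_le_nhds
      exact this
    · exact (((Real.continuous_sin.comp (continuous_const.mul continuous_id)).div_const
        2).continuousAt.mul (Real.continuousAt_log hxne)).continuousWithinAt
  have hftc : ∫ t in (0:ℝ)..π, (Real.cos (2*t) * Real.log t + Real.sin (2*t)/(2*t)) = 0 := by
    have hd : ∀ x ∈ Ioo (0:ℝ) π, HasDerivAt (fun t => Real.sin (2*t)/2 * Real.log t)
        (Real.cos (2*x) * Real.log x + Real.sin (2*x)/(2*x)) x := by
      intro x hx
      have h1 : HasDerivAt (fun t : ℝ => Real.sin (2*t)/2) (Real.cos (2*x)) x := by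
        have := ((Real.hasDerivAt_sin (2*x)).comp x
          ((hasDerivAt_id x).const_mul 2)).div_const 2
        exact this.congr_deriv (by ring)
      have h2 := h1.mul (Real.hasDerivAt_log hx.1.ne')
      refine h2.congr_deriv ?_
      rw [← div_eq_mul_inv (Real.sin (2*x)/2), div_div]
    have := my_ftc hπ.le hcont hd hint
    rw [this]
    simp [Real.sin_two_pi]
  have hsub : (∫ t in (0:ℝ)..π, Real.sin (2*t)/(2*t))
      = 2⁻¹ * ∫ u in (0:ℝ)..(2*π), Real.sin u / u := by
    have h := integral_comp_mul_left (a := (0:ℝ)) (b := π)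
      (fun u => Real.sin u / u) two_ne_zero
    rw [show (2:ℝ) * 0 = 0 by ring] at h
    rw [h, smul_eq_mul]
  rw [integral_add intCosLogT intSinc2] at hftc
  linarith [hftc, hsub]

lemma sinsq_bnd : ∀ t : ℝ, |Real.sin t ^ 2| ≤ 1 := fun t => by
  rw [abs_pow]
  exact pow_le_one₀ (abs_nonneg _) (Real.abs_sin_le_one _)

lemma intSin2LogSin : IntervalIntegrable (fun t => Real.sin t ^ 2 * Real.log (Real.sin t)) volume 0 π :=
  intLogSin (Real.measurable_sin.pow_const 2) sinsq_bnd

lemma intSin2LogT : IntervalIntegrable (fun t => Real.sin t ^ 2 * Real.log t) volume 0 π :=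
  intLogT (Real.measurable_sin.pow_const 2) sinsq_bnd

lemma A_val : ∫ t in (0:ℝ)..π, Real.sin t ^ 2 * Real.log (Real.sin t)
    = -(π * Real.log 2)/2 + π/4 := by
  have h1 : (fun t => Real.sin t ^ 2 * Real.log (Real.sin t))
      = fun t => (1/2) * Real.log (Real.sin t)
          - (1/2) * (Real.cos (2*t) * Real.log (Real.sin t)) := by
    funext t; rw [Real.sin_sq_eq_half_sub]; ring
  rw [h1, integral_sub (intLogSin'.const_mul _) (intCosLogSin.const_mul _),
    intervalIntegral.integral_const_mul, intervalIntegral.integral_const_mul, L_val, C_val]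
  ring

lemma B_val : ∫ t in (0:ℝ)..π, Real.sin t ^ 2 * Real.log t
    = (π * Real.log π - π)/2 + (∫ u in (0:ℝ)..(2*π), Real.sin u / u)/4 := by
  have h1 : (fun t => Real.sin t ^ 2 * Real.log t)
      = fun t => (1/2) * Real.log t - (1/2) * (Real.cos (2*t) * Real.log t) := by
    funext t; rw [Real.sin_sq_eq_half_sub]; ring
  rw [h1, integral_sub (logIntPi.const_mul _) (intCosLogT.const_mul _),
    intervalIntegral.integral_const_mul, intervalIntegral.integral_const_mul,
    integral_log_zero π Real.pi_pos logIntPi, D_val]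
  ring

lemma hEqOn : EqOn (fun t => Real.sin t ^ 2 * Real.log (Real.sin t / t))
    (fun t => Real.sin t ^ 2 * Real.log (Real.sin t) - Real.sin t ^ 2 * Real.log t)
    (uIcc (0:ℝ) π) := by
  intro t ht
  rw [uIcc_of_le Real.pi_pos.le] at ht
  rcases eq_or_lt_of_le ht.1 with h0 | h0
  · simp [← h0]
  rcases eq_or_lt_of_le ht.2 with h1 | h1
  · simp [h1]
  · have hsp : 0 < Real.sin t := Real.sin_pos_of_pos_of_lt_pi h0 h1
    simp only []
    rw [Real.log_div hsp.ne' (ne_of_gt h0)]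
    ring

lemma T_val : (∫ t in (0:ℝ)..π, Real.sin t ^ 2 * Real.log (Real.sin t / t))
    = π / 2 * (3/2 - (∫ u in (0:ℝ)..(2*π), Real.sin u / u)/(2*π) - Real.log (2*π)) := by
  rw [integral_congr hEqOn, integral_sub intSin2LogSin intSin2LogT, A_val, B_val,
    Real.log_mul two_ne_zero Real.pi_ne_zero]
  field_simp
  ring


/-- Eigenvalue condition determining `S₁⁽⁰⁾`:
`∫₀^π sin²t · ln(sin t / t) dt = (π/2)·(3/2 − Si(2π)/(2π) − ln(2π))`, where
`Si(x) = ∫₀^x (sin t)/t dt`; equivalently, with `S₁⁽⁰⁾ = 2π·exp(Si(2π)/(2π) − 3/2)`,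
`∫₀^π sin²t·[ln S₁⁽⁰⁾ + ln(sin t / t)] dt = 0`. -/
theorem eigenvalue_condition_S10 :
    let Si : ℝ → ℝ := fun x => ∫ t in (0 : ℝ)..x, Real.sin t / t
    ((∫ t in (0 : ℝ)..Real.pi, Real.sin t ^ 2 * Real.log (Real.sin t / t)) =
      Real.pi / 2 *
        (3 / 2 - Si (2 * Real.pi) / (2 * Real.pi) - Real.log (2 * Real.pi))) ∧
    (∫ t in (0 : ℝ)..Real.pi, Real.sin t ^ 2 *
        (Real.log (2 * Real.pi * Real.exp (Si (2 * Real.pi) / (2 * Real.pi) - 3 / 2))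
          + Real.log (Real.sin t / t))) = 0 := by
  intro Si
  have hπ := Real.pi_pos
  have hSi : Si (2 * π) = ∫ u in (0:ℝ)..(2*π), Real.sin u / u := rfl
  have h1 : (∫ t in (0 : ℝ)..π, Real.sin t ^ 2 * Real.log (Real.sin t / t)) =
      π / 2 * (3 / 2 - Si (2 * π) / (2 * π) - Real.log (2 * π)) := by
    rw [hSi]; exact T_val
  refine ⟨h1, ?_⟩
  set c := Real.log (2 * π * Real.exp (Si (2 * π) / (2 * π) - 3 / 2)) with hc
  have hcval : c = Real.log (2*π) + (Si (2 * π) / (2 * π) - 3 / 2) := by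
    rw [hc, Real.log_mul (by positivity) (Real.exp_ne_zero _), Real.log_exp]
  have hEq2 : EqOn (fun t => Real.sin t ^ 2 * (c + Real.log (Real.sin t / t)))
      (fun t => Real.sin t ^ 2 * c
        + (Real.sin t ^ 2 * Real.log (Real.sin t) - Real.sin t ^ 2 * Real.log t))
      (uIcc (0:ℝ) π) := by
    intro t ht
    have h2 := hEqOn ht
    simp only [] at h2 ⊢
    rw [mul_add, h2]
  rw [integral_congr hEq2, integral_add (f := fun t => Real.sin t ^ 2 * c)
      (((continuous_sin.pow 2).mul continuous_const).intervalIntegrable _ _)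
      (intSin2LogSin.sub intSin2LogT),
    integral_sub intSin2LogSin intSin2LogT, A_val, B_val]
  have hs2 : (∫ t in (0:ℝ)..π, Real.sin t ^ 2 * c) = c * (π/2) := by
    rw [intervalIntegral.integral_mul_const, integral_sin_sq]
    simp
    ring
  rw [hs2, hcval, hSi, Real.log_mul two_ne_zero Real.pi_ne_zero]
  field_simp
  ring
end

section
/- First-order delta expansion correction about n = 0 (Seidov): the function y(x) = 5x²/18 − 4 + (3 − 2√6/x − x²/6)·ln(1 − x/√6) + (3 + 2√6/x − x²/6)·ln(1 + x/√6), defined for 0 < x < √6, satisfies y''(x) + (2/x)·y'(x) = −ln(1 − x²/6) for all 0 < x < √6, together with the initial conditions y(x) → 0 and y'(x) → 0 as x → 0⁺. -/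
open Real Set Filter Topology

noncomputable def Y1 (s : ℝ) (x : ℝ) : ℝ :=
  2*x/9 + 4/x + (2*s/x^2 - x/3) * Real.log (1 - x/s)
    - (2*s/x^2 + x/3) * Real.log (1 + x/s)

lemma hasDerivAt_y (s x : ℝ) (hs0 : 0 < s) (hs6 : s^2 = 6) (hx0 : 0 < x) (hxs : x < s) :
    HasDerivAt (fun x => 5 * x ^ 2 / 18 - 4
        + (3 - 2 * s / x - x ^ 2 / 6) * Real.log (1 - x / s)
        + (3 + 2 * s / x - x ^ 2 / 6) * Real.log (1 + x / s)) (Y1 s x) x := by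
  have hxne : x ≠ 0 := hx0.ne'
  have hsne : s ≠ 0 := hs0.ne'
  have h1m : (0:ℝ) < 1 - x/s := by
    rw [sub_pos, div_lt_one hs0]; exact hxs
  have h1p : (0:ℝ) < 1 + x/s := by positivity
  have hsm : s - x ≠ 0 := (sub_pos.mpr hxs).ne'
  have hsp : s + x ≠ 0 := by positivity
  have hu1 : HasDerivAt (fun x : ℝ => 1 - x/s) (-(1/s)) x :=
    ((hasDerivAt_id x).div_const s).const_sub 1
  have hL1 : HasDerivAt (fun x : ℝ => Real.log (1 - x/s)) (-(1/s) / (1 - x/s)) x :=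
    hu1.log h1m.ne'
  have hu2 : HasDerivAt (fun x : ℝ => 1 + x/s) (1/s) x :=
    ((hasDerivAt_id x).div_const s).const_add 1
  have hL2 : HasDerivAt (fun x : ℝ => Real.log (1 + x/s)) ((1/s) / (1 + x/s)) x :=
    hu2.log h1p.ne'
  have hq : HasDerivAt (fun x : ℝ => 2*s/x) ((0 * x - 2*s*1)/x^2) x :=
    (hasDerivAt_const x (2*s)).div (hasDerivAt_id x) hxne
  have hA : HasDerivAt (fun x : ℝ => 3 - 2*s/x - x^2/6)
      (0 - (0 * x - 2*s*1)/x^2 - (2:ℕ) * x ^ 1 / 6) x :=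
    ((hasDerivAt_const x 3).sub hq).sub ((hasDerivAt_pow 2 x).div_const 6)
  have hB : HasDerivAt (fun x : ℝ => 3 + 2*s/x - x^2/6)
      (0 + (0 * x - 2*s*1)/x^2 - (2:ℕ) * x ^ 1 / 6) x :=
    ((hasDerivAt_const x 3).add hq).sub ((hasDerivAt_pow 2 x).div_const 6)
  have h0 : HasDerivAt (fun x : ℝ => 5 * x ^ 2 / 18 - 4) (5 * ((2:ℕ) * x ^ 1) / 18) x :=
    (((hasDerivAt_pow 2 x).const_mul 5).div_const 18).sub_const 4
  have H := (h0.add (hA.mul hL1)).add (hB.mul hL2)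
  refine H.congr_deriv ?_
  symm
  rw [Y1]
  set L1 := Real.log (1 - x/s) with hL1d
  set L2 := Real.log (1 + x/s) with hL2d
  field_simp
  linear_combination (-972 * x^3) * hs6

lemma hasDerivAt_Y1 (s x : ℝ) (hs0 : 0 < s) (hs6 : s^2 = 6) (hx0 : 0 < x) (hxs : x < s) :
    HasDerivAt (Y1 s) (-Real.log (1 - x^2/6) - 2/x * Y1 s x) x := by
  have hxne : x ≠ 0 := hx0.ne'
  have hsne : s ≠ 0 := hs0.ne'
  have hx2 : x^2 ≠ 0 := pow_ne_zero _ hxne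
  have h1m : (0:ℝ) < 1 - x/s := by
    rw [sub_pos, div_lt_one hs0]; exact hxs
  have h1p : (0:ℝ) < 1 + x/s := by positivity
  have hsm : s - x ≠ 0 := (sub_pos.mpr hxs).ne'
  have hsp : s + x ≠ 0 := by positivity
  have hu1 : HasDerivAt (fun x : ℝ => 1 - x/s) (-(1/s)) x :=
    ((hasDerivAt_id x).div_const s).const_sub 1
  have hL1 : HasDerivAt (fun x : ℝ => Real.log (1 - x/s)) (-(1/s) / (1 - x/s)) x :=
    hu1.log h1m.ne'
  have hu2 : HasDerivAt (fun x : ℝ => 1 + x/s) (1/s) x :=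
    ((hasDerivAt_id x).div_const s).const_add 1
  have hL2 : HasDerivAt (fun x : ℝ => Real.log (1 + x/s)) ((1/s) / (1 + x/s)) x :=
    hu2.log h1p.ne'
  have hq : HasDerivAt (fun x : ℝ => 2*s/x^2) ((0 * x^2 - 2*s*((2:ℕ)*x^1))/(x^2)^2) x :=
    (hasDerivAt_const x (2*s)).div (hasDerivAt_pow 2 x) hx2
  have hA : HasDerivAt (fun x : ℝ => 2*s/x^2 - x/3)
      ((0 * x^2 - 2*s*((2:ℕ)*x^1))/(x^2)^2 - 1/3) x :=
    hq.sub ((hasDerivAt_id x).div_const 3)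
  have hB : HasDerivAt (fun x : ℝ => 2*s/x^2 + x/3)
      ((0 * x^2 - 2*s*((2:ℕ)*x^1))/(x^2)^2 + 1/3) x :=
    hq.add ((hasDerivAt_id x).div_const 3)
  have h0 : HasDerivAt (fun x : ℝ => 2*x/9 + 4/x)
      (2*1/9 + (0 * x - 4*1)/x^2) x :=
    (((hasDerivAt_id x).const_mul 2).div_const 9).add
      ((hasDerivAt_const x 4).div (hasDerivAt_id x) hxne)
  have H := (h0.add (hA.mul hL1)).sub (hB.mul hL2)
  have hfac : 1 - x^2/6 = (1 - x/s) * (1 + x/s) := by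
    rw [show (6:ℝ) = s^2 from hs6.symm]
    field_simp
    ring
  have hlog : Real.log (1 - x^2/6) = Real.log (1 - x/s) + Real.log (1 + x/s) := by
    rw [hfac, Real.log_mul h1m.ne' h1p.ne']
  refine H.congr_deriv ?_
  symm
  rw [hlog, Y1]
  set L1 := Real.log (1 - x/s) with hL1d
  set L2 := Real.log (1 + x/s) with hL2d
  field_simp
  linear_combination (-18 * x^3) * hs6


lemma tendsto_y_aux (s : ℝ) (hs0 : 0 < s) :
    Tendsto (fun x : ℝ => 5 * x ^ 2 / 18 - 4
        + (3 - 2 * s / x - x ^ 2 / 6) * Real.log (1 - x / s)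
        + (3 + 2 * s / x - x ^ 2 / 6) * Real.log (1 + x / s))
      (𝓝[>] (0:ℝ)) (𝓝 0) := by
  have hsne : s ≠ 0 := hs0.ne'
  set ψ : ℝ → ℝ := fun x => Real.log (1 + x/s) - Real.log (1 - x/s) with hψdef
  have hψ0 : ψ 0 = 0 := by simp [hψdef]
  have hcont1 : ContinuousAt (fun x : ℝ => Real.log (1 - x/s)) 0 :=
    ContinuousAt.log (by fun_prop) (by norm_num)
  have hcont2 : ContinuousAt (fun x : ℝ => Real.log (1 + x/s)) 0 :=
    ContinuousAt.log (by fun_prop) (by norm_num)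
  have ht1 : Tendsto (fun x : ℝ => 5*x^2/18 - 4
      + (3 - x^2/6) * (Real.log (1 - x/s) + Real.log (1 + x/s)))
      (𝓝[>] (0:ℝ)) (𝓝 (-4)) := by
    have hc : ContinuousAt (fun x : ℝ => 5*x^2/18 - 4
        + (3 - x^2/6) * (Real.log (1 - x/s) + Real.log (1 + x/s))) 0 :=
      ContinuousAt.add (by fun_prop) (ContinuousAt.mul (by fun_prop) (hcont1.add hcont2))
    have hval : 5*(0:ℝ)^2/18 - 4
        + (3 - (0:ℝ)^2/6) * (Real.log (1 - 0/s) + Real.log (1 + 0/s)) = -4 := by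
      norm_num
    have := hc.tendsto.mono_left (nhdsWithin_le_nhds (s := Set.Ioi (0:ℝ)))
    rwa [hval] at this
  have hψd : HasDerivAt ψ (2/s) 0 := by
    have h2 : HasDerivAt (fun x : ℝ => Real.log (1 + x/s)) ((1/s)/(1+(0:ℝ)/s)) 0 :=
      (((hasDerivAt_id (0:ℝ)).div_const s).const_add 1).log (by norm_num)
    have h1 : HasDerivAt (fun x : ℝ => Real.log (1 - x/s)) (-(1/s)/(1-(0:ℝ)/s)) 0 :=
      (((hasDerivAt_id (0:ℝ)).div_const s).const_sub 1).log (by norm_num)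
    have H := h2.sub h1
    refine H.congr_deriv ?_
    symm
    field_simp
    ring
  have hslope := (hasDerivAt_iff_tendsto_slope.mp hψd).mono_left
    (nhdsWithin_mono (0:ℝ) (fun z hz => Set.mem_compl_singleton_iff.mpr (ne_of_gt hz)))
  have ht2 : Tendsto (fun x : ℝ => 2*s * slope ψ 0 x) (𝓝[>] (0:ℝ)) (𝓝 (2*s*(2/s))) :=
    hslope.const_mul (2*s)
  have hfinal := ht1.add ht2
  have hval : (-4:ℝ) + 2*s*(2/s) = 0 := by field_simp; ring
  rw [hval] at hfinal
  apply hfinal.congr'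
  filter_upwards [self_mem_nhdsWithin] with x hx
  have hxne : x ≠ 0 := ne_of_gt hx
  rw [slope_def_field, hψ0, hψdef]
  field_simp
  ring

lemma tendsto_Y1_aux (s : ℝ) (hs0 : 0 < s) :
    Tendsto (Y1 s) (𝓝[>] (0:ℝ)) (𝓝 0) := by
  have hsne : s ≠ 0 := hs0.ne'
  have hcont1 : ContinuousAt (fun x : ℝ => Real.log (1 - x/s)) 0 :=
    ContinuousAt.log (by fun_prop) (by norm_num)
  have hcont2 : ContinuousAt (fun x : ℝ => Real.log (1 + x/s)) 0 :=
    ContinuousAt.log (by fun_prop) (by norm_num)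
  set φ : ℝ → ℝ := fun x => Real.log (1 - x/s) - Real.log (1 + x/s) + 2*x/s with hφdef
  have hlh : Tendsto (fun x => φ x / x^2) (𝓝[>] (0:ℝ)) (𝓝 0) := by
    apply HasDerivAt.lhopital_zero_right_on_Ioo (a := 0) (b := s)
      (f' := fun x => 2/s - 1/(s-x) - 1/(s+x)) (g' := fun x => 2*x) hs0
    · intro x hx
      have hx0 : (0:ℝ) < x := hx.1
      have hxlt : x < s := hx.2
      have hxne : x ≠ 0 := (ne_of_gt hx.1)
      have hsm : s - x ≠ 0 := (sub_pos.mpr hx.2).ne'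
      have hsp : s + x ≠ 0 := by positivity
      have h1m : (0:ℝ) < 1 - x/s := by rw [sub_pos, div_lt_one hs0]; exact hx.2
      have h1p : (0:ℝ) < 1 + x/s := by positivity
      have h1 : HasDerivAt (fun x : ℝ => Real.log (1 - x/s)) (-(1/s)/(1-x/s)) x :=
        (((hasDerivAt_id x).div_const s).const_sub 1).log h1m.ne'
      have h2 : HasDerivAt (fun x : ℝ => Real.log (1 + x/s)) ((1/s)/(1+x/s)) x :=
        (((hasDerivAt_id x).div_const s).const_add 1).log h1p.ne'
      have h3 : HasDerivAt (fun x : ℝ => 2*x/s) (2*1/s) x :=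
        ((hasDerivAt_id x).const_mul 2).div_const s
      have H := (h1.sub h2).add h3
      refine H.congr_deriv ?_
      symm
      field_simp
      ring
    · intro x _
      simpa using hasDerivAt_pow 2 x
    · intro x hx
      exact mul_ne_zero two_ne_zero (ne_of_gt hx.1)
    · have hc : ContinuousAt φ 0 := (hcont1.sub hcont2).add (by fun_prop)
      have hval : φ 0 = 0 := by simp [hφdef]
      have := hc.tendsto.mono_left (nhdsWithin_le_nhds (s := Set.Ioi (0:ℝ)))
      rwa [hval] at this
    · have := ((continuous_pow 2).tendsto (0:ℝ)).mono_left
        (nhdsWithin_le_nhds (s := Set.Ioi (0:ℝ)))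
      simpa using this
    · have hc : ContinuousAt (fun x : ℝ => -x/(s*((s-x)*(s+x)))) 0 := by
        apply ContinuousAt.div (by fun_prop) (by fun_prop)
        have : (0:ℝ) < s*((s-0)*(s+0)) := by simp only [sub_zero, add_zero]; positivity
        exact this.ne'
      have hval : -(0:ℝ)/(s*((s-0)*(s+0))) = 0 := by simp
      have hbase := hc.tendsto.mono_left (nhdsWithin_le_nhds (s := Set.Ioi (0:ℝ)))
      rw [hval] at hbase
      apply hbase.congr'
      filter_upwards [Ioo_mem_nhdsGT_of_mem ⟨le_refl (0:ℝ), hs0⟩] with x hx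
      have hx0 : (0:ℝ) < x := hx.1
      have hxne : x ≠ 0 := ne_of_gt hx.1
      have hsm : s - x ≠ 0 := (sub_pos.mpr hx.2).ne'
      have hsp : s + x ≠ 0 := by positivity
      field_simp
      ring
  have ht1 : Tendsto (fun x : ℝ => 2*x/9
      - x/3 * (Real.log (1 - x/s) + Real.log (1 + x/s))) (𝓝[>] (0:ℝ)) (𝓝 0) := by
    have hc : ContinuousAt (fun x : ℝ => 2*x/9
        - x/3 * (Real.log (1 - x/s) + Real.log (1 + x/s))) 0 :=
      ContinuousAt.sub (by fun_prop) (ContinuousAt.mul (by fun_prop) (hcont1.add hcont2))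
    have hval : 2*(0:ℝ)/9 - (0:ℝ)/3 * (Real.log (1 - 0/s) + Real.log (1 + 0/s)) = 0 := by
      norm_num
    have := hc.tendsto.mono_left (nhdsWithin_le_nhds (s := Set.Ioi (0:ℝ)))
    rwa [hval] at this
  have ht2 : Tendsto (fun x : ℝ => 2*s * (φ x / x^2)) (𝓝[>] (0:ℝ)) (𝓝 (2*s*0)) :=
    hlh.const_mul (2*s)
  have hfinal := ht1.add ht2
  rw [show (0:ℝ) + 2*s*0 = 0 by ring] at hfinal
  apply hfinal.congr'
  filter_upwards [Ioo_mem_nhdsGT_of_mem ⟨le_refl (0:ℝ), hs0⟩] with x hx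
  have hxne : x ≠ 0 := ne_of_gt hx.1
  rw [hφdef, Y1]
  field_simp
  ring

/-- First-order delta expansion correction about `n = 0` (Seidov): the function
`y(x) = 5x²/18 − 4 + (3 − 2√6/x − x²/6)·ln(1 − x/√6) + (3 + 2√6/x − x²/6)·ln(1 + x/√6)`
satisfies `y'' + (2/x)·y' = −ln(1 − x²/6)` on `(0, √6)`, with `y(x) → 0` and `y'(x) → 0`
as `x → 0⁺`. -/
theorem delta_expansion_first_order_n0_seidov :
    let y : ℝ → ℝ := fun x =>
      5 * x ^ 2 / 18 - 4
        + (3 - 2 * Real.sqrt 6 / x - x ^ 2 / 6) * Real.log (1 - x / Real.sqrt 6)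
        + (3 + 2 * Real.sqrt 6 / x - x ^ 2 / 6) * Real.log (1 + x / Real.sqrt 6)
    (∀ x ∈ Set.Ioo (0 : ℝ) (Real.sqrt 6),
      deriv (deriv y) x + 2 / x * deriv y x = -Real.log (1 - x ^ 2 / 6)) ∧
    Filter.Tendsto y (nhdsWithin 0 (Set.Ioi 0)) (nhds 0) ∧
    Filter.Tendsto (deriv y) (nhdsWithin 0 (Set.Ioi 0)) (nhds 0) := by
  intro y
  have hs0 : (0:ℝ) < Real.sqrt 6 := Real.sqrt_pos.mpr (by norm_num)
  have hs6 : Real.sqrt 6 ^ 2 = 6 := Real.sq_sqrt (by norm_num)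
  have hy : ∀ x ∈ Set.Ioo (0:ℝ) (Real.sqrt 6), HasDerivAt y (Y1 (Real.sqrt 6) x) x :=
    fun x hx => hasDerivAt_y (Real.sqrt 6) x hs0 hs6 hx.1 hx.2
  have hderiv : Set.EqOn (deriv y) (Y1 (Real.sqrt 6)) (Set.Ioo 0 (Real.sqrt 6)) :=
    fun x hx => (hy x hx).deriv
  refine ⟨?_, ?_, ?_⟩
  · intro x hx
    have hev : deriv y =ᶠ[𝓝 x] Y1 (Real.sqrt 6) :=
      Filter.eventuallyEq_of_mem (isOpen_Ioo.mem_nhds hx) hderiv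
    rw [hev.deriv_eq, (hasDerivAt_Y1 (Real.sqrt 6) x hs0 hs6 hx.1 hx.2).deriv, hderiv hx]
    ring
  · exact tendsto_y_aux (Real.sqrt 6) hs0
  · have hev : deriv y =ᶠ[𝓝[>] (0:ℝ)] Y1 (Real.sqrt 6) :=
      Filter.eventuallyEq_of_mem (Ioo_mem_nhdsGT_of_mem ⟨le_refl (0:ℝ), hs0⟩) hderiv
    exact (tendsto_Y1_aux (Real.sqrt 6) hs0).congr' hev.symm
end
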